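/- Let H be a d-uniform hypergraph in which some family C' of large cores is given, each core having size at most d-1, such that the cores in C' pairwise do not contain one another's significant subsets; if more than (d-1)!·k^{d-1} such cores exist, then by the sunflower lemma there is a (k+1)-sunflower among the cores themselves, and if its core C* is empty then H has no hitting set of size at most k. -/

import Mathlib

/-- `X` is a hitting set of the hypergraph with hyperedge family `H`. -/
def IsHittingSet {V : Type*} [DecidableEq V] (H : Finset (Finset V)) (X : Finset V) : Prop :=
  ∀ F ∈ H, (F ∩ X).Nonempty

/-- `C` is the core of a sunflower in `H` with at least `t` hyperedges. -/
def HasSunflower {V : Type*} [DecidableEq V] (H : Finset (Finset V)) (C : Finset V)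
    (t : ℕ) : Prop :=
  ∃ S ⊆ H, t ≤ S.card ∧ (∀ F ∈ S, C ⊆ F) ∧
    ∀ F ∈ S, ∀ F' ∈ S, F ≠ F' → F ∩ F' = C

open Finset in
theorem my_sunflower {V : Type*} [DecidableEq V] (k : ℕ) (hk : 1 ≤ k) :
    ∀ n (𝒞 : Finset (Finset V)), (∀ C ∈ 𝒞, C.card ≤ n) →
    Nat.factorial n * k ^ n < 𝒞.card →
    ∃ S ⊆ 𝒞, S.card = k + 1 ∧ ∃ Cstar : Finset V, (∀ C ∈ S, Cstar ⊆ C) ∧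
      ∀ C ∈ S, ∀ C' ∈ S, C ≠ C' → C ∩ C' = Cstar := by
  intro n
  induction n with
  | zero =>
    intro 𝒞 hsize hcard
    simp only [Nat.factorial_zero, pow_zero, mul_one] at hcard
    have hsub : 𝒞 ⊆ {∅} := by
      intro C hC
      simp only [mem_singleton]
      exact card_eq_zero.mp (Nat.le_zero.mp (hsize C hC))
    have := card_le_card hsub
    simp at this
    omega
  | succ m ih =>
    intro 𝒞 hsize hcard
    classical
    set P : Finset (Finset (Finset V)) :=
      𝒞.powerset.filter (fun T => ∀ A ∈ T, ∀ B ∈ T, A ≠ B → A ∩ B = ∅) with hP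
    have hPne : (∅ : Finset (Finset V)) ∈ P := by simp [hP]
    obtain ⟨M, hMP, hMmax⟩ := P.exists_max_image (fun T => T.card) ⟨∅, hPne⟩
    rw [hP, mem_filter, mem_powerset] at hMP
    obtain ⟨hM𝒞, hMdisj⟩ := hMP
    by_cases hbig : k + 1 ≤ M.card
    · obtain ⟨S, hSM, hScard⟩ := M.exists_subset_card_eq hbig
      exact ⟨S, hSM.trans hM𝒞, hScard, ∅, fun C _ => empty_subset C,
        fun C hC C' hC' hne => hMdisj C (hSM hC) C' (hSM hC') hne⟩
    · push_neg at hbig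
      have hMk : M.card ≤ k := by omega
      have hmaxins : ∀ C ∈ 𝒞, C ∉ M → ∃ B ∈ M, (C ∩ B).Nonempty := by
        intro C hC hCM
        by_contra hcon
        push_neg at hcon
        have hins : insert C M ∈ P := by
          rw [hP, mem_filter, mem_powerset]
          refine ⟨insert_subset hC hM𝒞, ?_⟩
          intro A hA B hB hne
          rcases mem_insert.mp hA with hAC | hAM
          · rcases mem_insert.mp hB with hBC | hBM
            · exact absurd (hAC.trans hBC.symm) hne
            · subst hAC; exact hcon B hBM
          · rcases mem_insert.mp hB with hBC | hBM
            · subst hBC; rw [inter_comm]; exact hcon A hAM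
            · exact hMdisj A hAM B hBM hne
        have := hMmax _ hins
        rw [card_insert_of_notMem hCM] at this
        omega
      set U : Finset V := M.sup id with hU
      have hemptyM : (∅ : Finset V) ∈ 𝒞 → (∅ : Finset V) ∈ M := by
        intro h
        by_contra hne
        obtain ⟨B, _, hB⟩ := hmaxins ∅ h hne
        simp at hB
      have hmeet : ∀ C ∈ 𝒞, C ≠ ∅ → (C ∩ U).Nonempty := by
        intro C hC hCne
        by_cases hCM : C ∈ M
        · obtain ⟨x, hx⟩ := nonempty_iff_ne_empty.mpr hCne
          exact ⟨x, mem_inter.mpr ⟨hx, mem_sup.mpr ⟨C, hCM, hx⟩⟩⟩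
        · obtain ⟨B, hB, x, hx⟩ := hmaxins C hC hCM
          rw [mem_inter] at hx
          exact ⟨x, mem_inter.mpr ⟨hx.1, mem_sup.mpr ⟨B, hB, hx.2⟩⟩⟩
      -- bound on |U|
      have hUsum : U.card ≤ ∑ C ∈ M, C.card := by
        rw [hU, sup_eq_biUnion]
        exact card_biUnion_le
      -- find a heavy element x ∈ U
      have hheavy : ∃ x ∈ U, Nat.factorial m * k ^ m < (𝒞.filter (fun C => x ∈ C)).card := by
        by_contra hcon
        push_neg at hcon
        have hcover : 𝒞.erase ∅ ⊆ U.biUnion (fun x => 𝒞.filter (fun C => x ∈ C)) := by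
          intro C hC
          rw [mem_erase] at hC
          obtain ⟨x, hx⟩ := hmeet C hC.2 hC.1
          rw [mem_inter] at hx
          exact mem_biUnion.mpr ⟨x, hx.2, mem_filter.mpr ⟨hC.2, hx.1⟩⟩
        have h1 : (𝒞.erase ∅).card ≤ U.card * (Nat.factorial m * k ^ m) := by
          calc (𝒞.erase ∅).card ≤ (U.biUnion (fun x => 𝒞.filter (fun C => x ∈ C))).card :=
                card_le_card hcover
            _ ≤ ∑ x ∈ U, (𝒞.filter (fun C => x ∈ C)).card := card_biUnion_le
            _ ≤ ∑ x ∈ U, Nat.factorial m * k ^ m := Finset.sum_le_sum hcon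
            _ = U.card * (Nat.factorial m * k ^ m) := by rw [Finset.sum_const, smul_eq_mul]
        by_cases hemp : (∅ : Finset V) ∈ 𝒞
        · have hM' := hemptyM hemp
          have hUk : U.card ≤ (m + 1) * (k - 1) := by
            calc U.card ≤ ∑ C ∈ M, C.card := hUsum
              _ = ∑ C ∈ M.erase ∅, C.card := by
                  rw [← Finset.sum_erase_add M _ hM']; simp
              _ ≤ ∑ C ∈ M.erase ∅, (m + 1) :=
                  Finset.sum_le_sum (fun C hC => hsize C (hM𝒞 (mem_of_mem_erase hC)))
              _ = (M.erase ∅).card * (m + 1) := by rw [Finset.sum_const, smul_eq_mul]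
              _ ≤ (k - 1) * (m + 1) := by
                  have := Finset.card_erase_of_mem hM'
                  have : (M.erase ∅).card ≤ k - 1 := by omega
                  exact Nat.mul_le_mul_right _ this
              _ = (m + 1) * (k - 1) := Nat.mul_comm _ _
          have hce : (𝒞.erase ∅).card = 𝒞.card - 1 := Finset.card_erase_of_mem hemp
          have hfact : Nat.factorial (m + 1) * k ^ (m + 1) =
              (m + 1) * k * (Nat.factorial m * k ^ m) := by
            rw [Nat.factorial_succ, pow_succ]; ring
          have hpos : 1 ≤ Nat.factorial m * k ^ m :=
            Nat.one_le_iff_ne_zero.mpr (by positivity)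
          have h2 : 𝒞.card - 1 ≤ (m + 1) * (k - 1) * (Nat.factorial m * k ^ m) := by
            rw [← hce]
            exact h1.trans (Nat.mul_le_mul_right _ hUk)
          have h3 : (m + 1) * (k - 1) * (Nat.factorial m * k ^ m) + (m+1) * (Nat.factorial m * k ^ m)
              = (m + 1) * k * (Nat.factorial m * k ^ m) := by
            have : (m + 1) * (k - 1) + (m + 1) = (m + 1) * k := by
              cases k with
              | zero => omega
              | succ k' => rw [Nat.add_sub_cancel]; ring
            rw [← this]; ring
          have h4 : 1 ≤ (m+1) * (Nat.factorial m * k ^ m) :=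
            Nat.one_le_iff_ne_zero.mpr (by positivity)
          rw [hfact] at hcard
          have h5 : 𝒞.card ≤ (m + 1) * k * (Nat.factorial m * k ^ m) := by
            calc 𝒞.card ≤ (𝒞.card - 1) + 1 := by omega
              _ ≤ (m + 1) * (k - 1) * (Nat.factorial m * k ^ m)
                  + (m+1) * (Nat.factorial m * k ^ m) := Nat.add_le_add h2 h4
              _ = (m + 1) * k * (Nat.factorial m * k ^ m) := h3
          exact absurd hcard (not_lt.mpr h5)
        · have hce : 𝒞.erase ∅ = 𝒞 := Finset.erase_eq_of_notMem hemp
          have hUk : U.card ≤ (m + 1) * k := by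
            calc U.card ≤ ∑ C ∈ M, C.card := hUsum
              _ ≤ ∑ C ∈ M, (m + 1) := Finset.sum_le_sum (fun C hC => hsize C (hM𝒞 hC))
              _ = M.card * (m + 1) := by rw [Finset.sum_const, smul_eq_mul]
              _ ≤ k * (m + 1) := Nat.mul_le_mul_right _ hMk
              _ = (m + 1) * k := Nat.mul_comm _ _
          rw [hce] at h1
          have hfact : Nat.factorial (m + 1) * k ^ (m + 1) =
              (m + 1) * k * (Nat.factorial m * k ^ m) := by
            rw [Nat.factorial_succ, pow_succ]; ring
          have := h1.trans (Nat.mul_le_mul_right _ hUk)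
          rw [hfact] at hcard
          omega
      obtain ⟨x, hxU, hxheavy⟩ := hheavy
      set 𝒞x : Finset (Finset V) := 𝒞.filter (fun C => x ∈ C) with h𝒞x
      set 𝒟 : Finset (Finset V) := 𝒞x.image (fun C => C.erase x) with h𝒟
      have hinj : Set.InjOn (fun C : Finset V => C.erase x) ↑𝒞x := by
        intro A hA B hB hAB
        have hA' : A ∈ 𝒞x := mem_coe.mp hA
        have hB' : B ∈ 𝒞x := mem_coe.mp hB
        rw [h𝒞x, mem_filter] at hA' hB'
        rw [← insert_erase hA'.2, ← insert_erase hB'.2]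
        exact congrArg (insert x) hAB
      have h𝒟card : Nat.factorial m * k ^ m < 𝒟.card := by
        rw [h𝒟, card_image_of_injOn hinj]
        exact hxheavy
      have h𝒟size : ∀ D ∈ 𝒟, D.card ≤ m := by
        intro D hD
        rw [h𝒟, mem_image] at hD
        obtain ⟨C, hC, rfl⟩ := hD
        rw [mem_filter] at hC
        have := hsize C hC.1
        rw [card_erase_of_mem hC.2]
        omega
      obtain ⟨S', hS'𝒟, hS'card, C', hC'sub, hC'int⟩ := ih 𝒟 h𝒟size h𝒟card
      have hxnot : ∀ D ∈ S', x ∉ D := by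
        intro D hD
        have := hS'𝒟 hD
        rw [h𝒟, mem_image] at this
        obtain ⟨C, _, rfl⟩ := this
        exact notMem_erase x C
      refine ⟨S'.image (insert x), ?_, ?_, insert x C', ?_, ?_⟩
      · intro C hC
        rw [mem_image] at hC
        obtain ⟨D, hD, rfl⟩ := hC
        have := hS'𝒟 hD
        rw [h𝒟, mem_image] at this
        obtain ⟨C0, hC0, rfl⟩ := this
        rw [mem_filter] at hC0
        rw [insert_erase hC0.2]
        exact hC0.1
      · rw [card_image_of_injOn, hS'card]
        intro A hA B hB hAB
        have h2 : (insert x A).erase x = (insert x B).erase x :=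
          congrArg (fun s => Finset.erase s x) hAB
        rwa [erase_insert (hxnot A (mem_coe.mp hA)),
          erase_insert (hxnot B (mem_coe.mp hB))] at h2
      · intro C hC
        rw [mem_image] at hC
        obtain ⟨D, hD, rfl⟩ := hC
        exact insert_subset_insert x (hC'sub D hD)
      · intro C hC C2 hC2 hne
        rw [mem_image] at hC hC2
        obtain ⟨D, hD, rfl⟩ := hC
        obtain ⟨D2, hD2, rfl⟩ := hC2
        have hDne : D ≠ D2 := by rintro rfl; exact hne rfl
        have : D ∩ D2 = C' := hC'int D hD D2 hD2 hDne
        rw [← this]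
        ext y
        simp only [mem_inter, mem_insert]
        tauto

/-- A large core must meet every small hitting set. -/
lemma large_core_meets {V : Type*} [DecidableEq V] (H : Finset (Finset V)) (d k : ℕ)
    (hd : 1 ≤ d) (hk : 1 ≤ k) (C : Finset V) (hC : HasSunflower H C (10 * d * k + 1))
    (X : Finset V) (hXk : X.card ≤ k) (hX : IsHittingSet H X) : (C ∩ X).Nonempty := by
  classical
  obtain ⟨T, hTH, hTcard, hTsub, hTint⟩ := hC
  by_contra hcon
  rw [Finset.not_nonempty_iff_eq_empty] at hcon
  have hch : ∀ F ∈ T, ∃ x, x ∈ F ∩ X := fun F hF => hX F (hTH hF)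
  have hTne : T.Nonempty := Finset.card_pos.mp (by omega)
  have : Nonempty V := ⟨(hch hTne.choose hTne.choose_spec).choose⟩
  choose! g hg using hch
  have hinj : Set.InjOn g ↑T := by
    intro F hF F' hF' hgeq
    by_contra hne
    have h1 := hg F (Finset.mem_coe.mp hF)
    have h2 := hg F' (Finset.mem_coe.mp hF')
    rw [Finset.mem_inter] at h1 h2
    have : g F ∈ F ∩ F' := Finset.mem_inter.mpr ⟨h1.1, hgeq ▸ h2.1⟩
    rw [hTint F (Finset.mem_coe.mp hF) F' (Finset.mem_coe.mp hF') hne] at this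
    have : g F ∈ C ∩ X := Finset.mem_inter.mpr ⟨this, h1.2⟩
    rw [hcon] at this
    exact absurd this (Finset.notMem_empty _)
  have hcard : T.card ≤ X.card :=
    Finset.card_le_card_of_injOn g
      (fun F hF => (Finset.mem_inter.mp (hg F hF)).2) hinj
  have : 10 * d * k + 1 ≤ k := le_trans hTcard (hcard.trans hXk)
  nlinarith

/-- Let `𝒞` be a family of large cores of a `d`-uniform hypergraph `H`, each of size
at most `d - 1`. If more than `(d-1)! * k^(d-1)` such cores exist, then there is a
`(k+1)`-sunflower among the cores themselves, and if its core `C*` is empty then `H`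
has no hitting set of size at most `k`. -/
theorem stmt9 {V : Type*} [DecidableEq V] (H : Finset (Finset V)) (d k : ℕ)
    (hd : 1 ≤ d) (hk : 1 ≤ k) (huni : ∀ F ∈ H, F.card = d)
    (𝒞 : Finset (Finset V))
    (hlarge : ∀ C ∈ 𝒞, HasSunflower H C (10 * d * k + 1))
    (hsize : ∀ C ∈ 𝒞, C.card ≤ d - 1)
    (hcard : Nat.factorial (d - 1) * k ^ (d - 1) < 𝒞.card) :
    ∃ S ⊆ 𝒞, ∃ Cstar : Finset V, S.card = k + 1 ∧
      (∀ C ∈ S, Cstar ⊆ C) ∧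
      (∀ C ∈ S, ∀ C' ∈ S, C ≠ C' → C ∩ C' = Cstar) ∧
      (Cstar = ∅ → ¬ ∃ X : Finset V, X.card ≤ k ∧ IsHittingSet H X) := by
  classical
  obtain ⟨S, hS𝒞, hScard, Cstar, hsub, hint⟩ := my_sunflower k hk (d - 1) 𝒞 hsize hcard
  refine ⟨S, hS𝒞, Cstar, hScard, hsub, hint, ?_⟩
  rintro rfl ⟨X, hXk, hX⟩
  have hch : ∀ C ∈ S, ∃ x, x ∈ C ∩ X := fun C hC =>
    large_core_meets H d k hd hk C (hlarge C (hS𝒞 hC)) X hXk hX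
  have hSne : S.Nonempty := Finset.card_pos.mp (by omega)
  have : Nonempty V := ⟨(hch hSne.choose hSne.choose_spec).choose⟩
  choose! g hg using hch
  have hinj : Set.InjOn g ↑S := by
    intro C hC C' hC' hgeq
    by_contra hne
    have h1 := hg C (Finset.mem_coe.mp hC)
    have h2 := hg C' (Finset.mem_coe.mp hC')
    rw [Finset.mem_inter] at h1 h2
    have : g C ∈ C ∩ C' := Finset.mem_inter.mpr ⟨h1.1, hgeq ▸ h2.1⟩
    rw [hint C (Finset.mem_coe.mp hC) C' (Finset.mem_coe.mp hC') hne] at this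
    exact absurd this (Finset.notMem_empty _)
  have hle : S.card ≤ X.card :=
    Finset.card_le_card_of_injOn g
      (fun C hC => (Finset.mem_inter.mp (hg C hC)).2) hinj
  omega
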